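/- Let G = (N, E) be a directed graph satisfying Assumption 1 (V_t ∩ V_h = ∅), let V_ud be gradient-distributed with respect to G_ud = (N, E_ud), and let V̄_ud be gradient-distributed with respect to Ḡ_ud = (N, Ē_ud). Then the proposed controller is distributed with respect to G: for every i ∈ N and all states X, X' ∈ (ℝ^d)^n with x_j = x'_j for every j ∈ N_i(G) ∪ {i}, one has f_i(X) = f_i(X'). -/
import Mathlib


open scoped RealInnerProductSpace

/-- The set of unidirectional edges of a directed graph with edge set `E`:
edges `(i,j) ∈ E` whose reverse `(j,i)` is not in `E`. -/
def Edi {n : ℕ} (E : Set (Fin n × Fin n)) : Set (Fin n × Fin n) :=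
  {p | p ∈ E ∧ (p.2, p.1) ∉ E}

/-- The set of bidirectional edges of a directed graph with edge set `E`. -/
def Eud {n : ℕ} (E : Set (Fin n × Fin n)) : Set (Fin n × Fin n) :=
  {p | p ∈ E ∧ (p.2, p.1) ∈ E}

/-- The set of tails of unidirectional edges. -/
def Vt {n : ℕ} (E : Set (Fin n × Fin n)) : Set (Fin n) :=
  {i | ∃ j, (i, j) ∈ Edi E}

/-- The set of heads of unidirectional edges. -/
def Vh {n : ℕ} (E : Set (Fin n × Fin n)) : Set (Fin n) :=
  {i | ∃ j, (j, i) ∈ Edi E}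

/-- The undirected closure edge set `Ē_ud = E ∪ {(i,j) : (j,i) ∈ E_di}`. -/
def Ebar {n : ℕ} (E : Set (Fin n × Fin n)) : Set (Fin n × Fin n) :=
  E ∪ {p | (p.2, p.1) ∈ Edi E}

/-- The gradient `∇_i V(X) ∈ ℝ^d` of `V : (ℝ^d)^n → ℝ` with respect to the state `x_i`
of agent `i`. -/
noncomputable def gradI {d n : ℕ} (V : (Fin n → EuclideanSpace ℝ (Fin d)) → ℝ)
    (i : Fin n) (X : Fin n → EuclideanSpace ℝ (Fin d)) : EuclideanSpace ℝ (Fin d) :=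
  gradient (fun z => V (Function.update X i z)) (X i)

/-- `V` is gradient-distributed with respect to the graph with edge set `F`: for all `i`
and states agreeing on `N_i ∪ {i}`, the `i`-th gradient agrees. -/
def GradDistrib {d n : ℕ} (F : Set (Fin n × Fin n))
    (V : (Fin n → EuclideanSpace ℝ (Fin d)) → ℝ) : Prop :=
  ∀ i : Fin n, ∀ X X' : Fin n → EuclideanSpace ℝ (Fin d),
    (∀ j, (i, j) ∈ F → X j = X' j) → X i = X' i → gradI V i X = gradI V i X'

/-- The constrained projection `ḡ` (explicit solution of the minimization problem
`min ‖g − (λ a + η b)/2‖²` s.t. `⟨g,a⟩ ≥ 0`, `⟨g,b⟩ ≥ 0`), where `a = ∇_i V̄_ud(X)`,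
`b = ∇_i V_ud(X)`.  The final case is unreachable for `λ, η > 0`. -/
noncomputable def gbar {d : ℕ} (lam eta : ℝ) (a b : EuclideanSpace ℝ (Fin d)) :
    EuclideanSpace ℝ (Fin d) :=
  let gh := (2 : ℝ)⁻¹ • (lam • a + eta • b)
  if 0 ≤ ⟪gh, a⟫ ∧ 0 ≤ ⟪gh, b⟫ then gh
  else if ⟪gh, a⟫ < 0 ∧ 0 ≤ ⟪gh, b⟫ then gh - (⟪gh, a⟫ / ‖a‖ ^ 2) • a
  else if 0 ≤ ⟪gh, a⟫ ∧ ⟪gh, b⟫ < 0 then gh - (⟪gh, b⟫ / ‖b‖ ^ 2) • b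
  else gh

open Classical in
/-- The proposed distributed controller `f_i(X)`:
`f_i(X) = −ḡ_i(X) − κ_i ∇_i V_ud(X)` for `i ∈ V_t` and
`f_i(X) = −μ_i ∇_i V_ud(X)` for `i ∈ N \ V_t`. -/
noncomputable def ctrl {d n : ℕ} (E : Set (Fin n × Fin n))
    (Vud Vbud : (Fin n → EuclideanSpace ℝ (Fin d)) → ℝ)
    (lam eta kappa mu : Fin n → ℝ) (i : Fin n)
    (X : Fin n → EuclideanSpace ℝ (Fin d)) : EuclideanSpace ℝ (Fin d) :=
  if i ∈ Vt E then
    -gbar (lam i) (eta i) (gradI Vbud i X) (gradI Vud i X) - kappa i • gradI Vud i X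
  else
    -(mu i • gradI Vud i X)

/-- Theorem 1: under Assumption 1 and gradient-distributedness of `V_ud` w.r.t. `G_ud`
and of `V̄_ud` w.r.t. `Ḡ_ud`, the proposed controller is distributed with respect to `G`:
whenever two states agree on `N_i(G) ∪ {i}`, the control inputs of agent `i` agree. -/
theorem controller_is_distributed
    {d n : ℕ} (E : Set (Fin n × Fin n)) (hE : ∀ p ∈ E, p.1 ≠ p.2)
    (hassu : Vt E ∩ Vh E = ∅)
    (Vud Vbud : (Fin n → EuclideanSpace ℝ (Fin d)) → ℝ)
    (hVud_diff : Differentiable ℝ Vud) (hVbud_diff : Differentiable ℝ Vbud)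
    (hVud : GradDistrib (Eud E) Vud) (hVbud : GradDistrib (Ebar E) Vbud)
    (lam eta kappa mu : Fin n → ℝ)
    (hlam : ∀ i ∈ Vt E, 0 < lam i) (heta : ∀ i ∈ Vt E, 0 < eta i)
    (hkappa : ∀ i ∈ Vt E, 0 ≤ kappa i) (hmu : ∀ i ∉ Vt E, 0 < mu i)
    (i : Fin n) (X X' : Fin n → EuclideanSpace ℝ (Fin d))
    (hXX' : ∀ j, (i, j) ∈ E → X j = X' j) (hii : X i = X' i) :
    ctrl E Vud Vbud lam eta kappa mu i X = ctrl E Vud Vbud lam eta kappa mu i X' := by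
  have hb : gradI Vud i X = gradI Vud i X' :=
    hVud i X X' (fun j hj => hXX' j hj.1) hii
  unfold ctrl
  by_cases ht : i ∈ Vt E
  · have ha : gradI Vbud i X = gradI Vbud i X' := by
      refine hVbud i X X' (fun j hj => ?_) hii
      rcases hj with hj | hj
      · exact hXX' j hj
      · exact absurd (Set.mem_inter ht (show i ∈ Vh E from ⟨j, hj⟩))
          (Set.eq_empty_iff_forall_notMem.mp hassu i)
    simp [ht, ha, hb]
  · simp [ht, hb]
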